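/- arXiv:2210.05247 — 3 statements merged into one kernel-verified Lean document; each statement's English description precedes it below -/
import Mathlib

section
/- (Proposition 1, finite-time lower bound on the weight ratio) Suppose u(0) > 0 and 0 < v_j(0) < (1/2)·log(p/(1-p)) for every j. Fix T > 0 and set M = u(T). Then for all 0 < t < T, the weight ratio satisfies v_1(t)/u(t) > [ (1/2)·log(p/(1-p)) + log tanh( artanh( √((1-p)/p) · e^{v_1(0)} ) + e^{-M} · 2^{D-1} · (p(1-p))^{D/2} · t ) ] / log( e^{u(0)} + t · Π_{i=1}^D ( p·e^{-v_i(0)} + √(p(1-p)) ) ); in particular this ratio is positive on (0, T). -/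
section ArtanhHelpers

noncomputable def artanh (x : ℝ) : ℝ := (1 / 2) * Real.log ((1 + x) / (1 - x))

lemma exp_two_artanh {x : ℝ} (h1 : -1 < x) (h2 : x < 1) :
    Real.exp (artanh x) ^ 2 = (1 + x) / (1 - x) := by
  have hr : 0 < (1 + x) / (1 - x) := div_pos (by linarith) (by linarith)
  rw [← Real.exp_nat_mul]
  rw [artanh, show ((2:ℕ):ℝ) * ((1/2) * Real.log ((1+x)/(1-x))) = Real.log ((1+x)/(1-x)) by
    push_cast; ring]
  exact Real.exp_log hr

lemma tanh_artanh {x : ℝ} (h1 : -1 < x) (h2 : x < 1) : Real.tanh (artanh x) = x := by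
  have hE2 := exp_two_artanh h1 h2
  set E := Real.exp (artanh x) with hE
  have hEpos : 0 < E := Real.exp_pos _
  have hE2' : E ^ 2 * (1 - x) = 1 + x := by
    rw [hE2, div_mul_cancel₀ _ (by linarith : (1:ℝ) - x ≠ 0)]
  rw [Real.tanh_eq_sinh_div_cosh, Real.sinh_eq, Real.cosh_eq, Real.exp_neg, ← hE]
  have hden : 0 < E + E⁻¹ := by positivity
  field_simp
  linear_combination hE2'

lemma artanh_tanh (y : ℝ) : artanh (Real.tanh y) = y := by
  have hE : Real.exp y ≠ 0 := (Real.exp_pos y).ne'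
  have hE2 : (0:ℝ) < Real.exp y ^ 2 + 1 := by positivity
  have ht : Real.tanh y = (Real.exp y ^ 2 - 1) / (Real.exp y ^ 2 + 1) := by
    rw [Real.tanh_eq_sinh_div_cosh, Real.sinh_eq, Real.cosh_eq, Real.exp_neg]
    field_simp
  rw [artanh, ht]
  have h1 : (1 + (Real.exp y ^ 2 - 1) / (Real.exp y ^ 2 + 1)) /
      (1 - (Real.exp y ^ 2 - 1) / (Real.exp y ^ 2 + 1)) = Real.exp y ^ 2 := by
    field_simp
    ring
  rw [h1, Real.log_pow, Real.log_exp]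
  push_cast; ring

lemma artanh_lt_artanh {a b : ℝ} (ha : -1 < a) (hab : a < b) (hb : b < 1) :
    artanh a < artanh b := by
  have h1 : (0:ℝ) < 1 - a := by linarith
  have h2 : (0:ℝ) < 1 - b := by linarith
  have h3 : (0:ℝ) < 1 + a := by linarith
  have hfrac : (1 + a) / (1 - a) < (1 + b) / (1 - b) := by
    rw [div_lt_div_iff₀ h1 h2]; nlinarith
  have := Real.log_lt_log (div_pos h3 h1) hfrac
  unfold artanh; linarith

lemma artanh_pos {x : ℝ} (h0 : 0 < x) (h1 : x < 1) : 0 < artanh x := by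
  have : (1:ℝ) < (1 + x) / (1 - x) := by
    rw [lt_div_iff₀ (by linarith)]; linarith
  have := Real.log_pos this
  unfold artanh; linarith

lemma tanh_pos' {x : ℝ} (hx : 0 < x) : 0 < Real.tanh x := by
  rw [Real.tanh_eq_sinh_div_cosh]
  exact div_pos (by rwa [Real.sinh_pos_iff]) (Real.cosh_pos x)

lemma tanh_lt_one' (x : ℝ) : Real.tanh x < 1 := by
  rw [Real.tanh_eq_sinh_div_cosh, div_lt_one (Real.cosh_pos x)]
  rw [Real.sinh_eq, Real.cosh_eq]
  have := Real.exp_pos (-x)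
  linarith

lemma hasDerivAt_artanh {x : ℝ} (h1 : -1 < x) (h2 : x < 1) :
    HasDerivAt artanh (1 / (1 - x ^ 2)) x := by
  have h1' : (0:ℝ) < 1 + x := by linarith
  have h2' : (0:ℝ) < 1 - x := by linarith
  have hd : HasDerivAt (fun y : ℝ => (1/2) * (Real.log (1 + y) - Real.log (1 - y)))
      (1 / (1 - x ^ 2)) x := by
    have l1 : HasDerivAt (fun y : ℝ => Real.log (1 + y)) (1 / (1 + x)) x := by
      simpa using (((hasDerivAt_id x).const_add 1).log h1'.ne')
    have l2 : HasDerivAt (fun y : ℝ => Real.log (1 - y)) (-1 / (1 - x)) x := by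
      have : HasDerivAt (fun y : ℝ => 1 - y) (-1) x := by
        simpa using ((hasDerivAt_id x).const_sub 1)
      simpa using (this.log h2'.ne')
    have := (l1.sub l2).const_mul (1/2 : ℝ)
    refine this.congr_deriv ?_
    have hne : (1:ℝ) - x ^ 2 ≠ 0 := by nlinarith
    field_simp
    ring
  apply hd.congr_of_eventuallyEq
  filter_upwards [isOpen_Ioo.mem_nhds (show x ∈ Set.Ioo (-1:ℝ) 1 from ⟨h1, h2⟩)] with y hy
  rw [artanh, Real.log_div (by linarith [hy.1]) (by linarith [hy.2])]

end ArtanhHelpers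

section MonoHelpers

lemma myMono' {f f' : ℝ → ℝ} {a b : ℝ}
    (hc : ContinuousOn f (Set.Icc a b))
    (hf : ∀ t ∈ Set.Ioo a b, HasDerivAt f (f' t) t)
    (h0 : ∀ t ∈ Set.Ioo a b, 0 ≤ f' t) : MonotoneOn f (Set.Icc a b) := by
  apply monotoneOn_of_hasDerivWithinAt_nonneg (convex_Icc a b) hc (f' := f')
  · intro x hx; rw [interior_Icc] at hx; exact (hf x hx).hasDerivWithinAt
  · intro x hx; rw [interior_Icc] at hx; exact h0 x hx

lemma myStrict' {f f' : ℝ → ℝ} {a b : ℝ}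
    (hc : ContinuousOn f (Set.Icc a b))
    (hf : ∀ t ∈ Set.Ioo a b, HasDerivAt f (f' t) t)
    (h0 : ∀ t ∈ Set.Ioo a b, 0 < f' t) : StrictMonoOn f (Set.Icc a b) := by
  apply strictMonoOn_of_hasDerivWithinAt_pos (convex_Icc a b) hc (f' := f')
  · intro x hx; rw [interior_Icc] at hx; exact (hf x hx).hasDerivWithinAt
  · intro x hx; rw [interior_Icc] at hx; exact h0 x hx

lemma myMonoIcc {f f' : ℝ → ℝ} {b : ℝ}
    (hf : ∀ t ∈ Set.Ici (0:ℝ), HasDerivWithinAt f (f' t) (Set.Ici 0) t)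
    (h0 : ∀ t, 0 < t → t < b → 0 ≤ f' t) : MonotoneOn f (Set.Icc 0 b) := by
  apply myMono' (f' := f')
  · exact fun t ht => ((hf t ht.1).continuousWithinAt).mono Set.Icc_subset_Ici_self
  · exact fun t ht => (hf t ht.1.le).hasDerivAt (Ici_mem_nhds ht.1)
  · exact fun t ht => h0 t ht.1 ht.2

lemma myMonoIci {f f' : ℝ → ℝ}
    (hf : ∀ t ∈ Set.Ici (0:ℝ), HasDerivWithinAt f (f' t) (Set.Ici 0) t)
    (h0 : ∀ t, 0 < t → 0 ≤ f' t) : MonotoneOn f (Set.Ici 0) := by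
  apply monotoneOn_of_hasDerivWithinAt_nonneg (convex_Ici 0)
    (fun t ht => (hf t ht).continuousWithinAt) (f' := f')
  · intro x hx; rw [interior_Ici] at hx
    exact ((hf x (Set.Ioi_subset_Ici_self hx)).hasDerivAt (Ici_mem_nhds hx)).hasDerivWithinAt
  · intro x hx; rw [interior_Ici] at hx; exact h0 x hx

end MonoHelpers

section PFacts

variable {p : ℝ}

lemma L_expV (hp : 1/2 < p) (hp1 : p < 1) :
    Real.exp ((1/2) * Real.log (p/(1-p))) = Real.sqrt (p/(1-p)) := by
  have hr : 0 < p/(1-p) := div_pos (by linarith) (by linarith)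
  rw [Real.sqrt_eq_rpow, Real.rpow_def_of_pos hr]; ring_nf

lemma L_qeV (hp : 1/2 < p) (hp1 : p < 1) :
    (1-p) * Real.exp ((1/2) * Real.log (p/(1-p))) = Real.sqrt (p*(1-p)) := by
  rw [L_expV hp hp1]
  calc (1-p) * Real.sqrt (p/(1-p)) = Real.sqrt ((1-p)^2) * Real.sqrt (p/(1-p)) := by
        rw [Real.sqrt_sq (by linarith : (0:ℝ) ≤ 1-p)]
    _ = Real.sqrt ((1-p)^2 * (p/(1-p))) := (Real.sqrt_mul (sq_nonneg _) _).symm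
    _ = Real.sqrt (p*(1-p)) := by
        congr 1
        have hne : (1:ℝ)-p ≠ 0 := by linarith
        have hne2 : p ≠ 0 := by linarith
        field_simp

lemma L_eNegV (hp : 1/2 < p) (hp1 : p < 1) :
    Real.exp (-((1/2) * Real.log (p/(1-p)))) = Real.sqrt ((1-p)/p) := by
  rw [Real.exp_neg, L_expV hp hp1, ← Real.sqrt_inv, inv_div]

lemma L_peV (hp : 1/2 < p) (hp1 : p < 1) :
    p * Real.exp (-((1/2) * Real.log (p/(1-p)))) = Real.sqrt (p*(1-p)) := by
  rw [L_eNegV hp hp1]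
  calc p * Real.sqrt ((1-p)/p) = Real.sqrt (p^2) * Real.sqrt ((1-p)/p) := by
        rw [Real.sqrt_sq (by linarith : (0:ℝ) ≤ p)]
    _ = Real.sqrt (p^2 * ((1-p)/p)) := (Real.sqrt_mul (sq_nonneg _) _).symm
    _ = Real.sqrt (p*(1-p)) := by
        congr 1
        have hne : (1:ℝ)-p ≠ 0 := by linarith
        have hne2 : p ≠ 0 := by linarith
        field_simp

lemma L_amgm (hp : 1/2 < p) (hp1 : p < 1) (x : ℝ) :
    2 * Real.sqrt (p*(1-p)) ≤ p * Real.exp (-x) + (1-p) * Real.exp x := by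
  have h1 : (0:ℝ) ≤ p * Real.exp (-x) := by positivity
  have h2 : (0:ℝ) ≤ (1-p) * Real.exp x := by
    have : (0:ℝ) < 1 - p := by linarith
    positivity
  have key := two_mul_le_add_sq (Real.sqrt (p * Real.exp (-x))) (Real.sqrt ((1-p) * Real.exp x))
  rw [Real.sq_sqrt h1, Real.sq_sqrt h2, mul_assoc, ← Real.sqrt_mul h1] at key
  have harg : p * Real.exp (-x) * ((1-p) * Real.exp x) = p * (1-p) := by
    rw [Real.exp_neg]
    field_simp
  rw [harg] at key
  linarith

lemma L_gle1 (hp : 1/2 < p) (hp1 : p < 1) {x : ℝ} (h0 : 0 ≤ x)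
    (hV : x ≤ (1/2) * Real.log (p/(1-p))) :
    p * Real.exp (-x) + (1-p) * Real.exp x ≤ 1 := by
  have hE1 : 1 ≤ Real.exp x := Real.one_le_exp h0
  have hEpos : 0 < Real.exp x := Real.exp_pos x
  have hEV : Real.exp x ≤ Real.exp ((1/2) * Real.log (p/(1-p))) := Real.exp_le_exp.2 hV
  have h2 : (1-p) * Real.exp x ≤ Real.sqrt (p*(1-p)) := by
    rw [← L_qeV hp hp1]
    have : (0:ℝ) < 1 - p := by linarith
    nlinarith
  have h3 : Real.sqrt (p*(1-p)) ≤ p := by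
    calc Real.sqrt (p*(1-p)) ≤ Real.sqrt (p^2) := Real.sqrt_le_sqrt (by nlinarith)
    _ = p := Real.sqrt_sq (by linarith)
  have h4 : (1-p) * Real.exp x ≤ p := h2.trans h3
  have hprod : 0 ≤ (Real.exp x - 1) * (p - (1-p) * Real.exp x) :=
    mul_nonneg (by linarith) (by linarith)
  rw [Real.exp_neg]
  have hinv : Real.exp x * (Real.exp x)⁻¹ = 1 := mul_inv_cancel₀ hEpos.ne'
  nlinarith [hprod, hinv, hEpos]

lemma L_hh_nonneg (hp : 1/2 < p) (hp1 : p < 1) {x : ℝ}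
    (hV : x ≤ (1/2) * Real.log (p/(1-p))) :
    0 ≤ p * Real.exp (-x) - (1-p) * Real.exp x := by
  have h1 : p * Real.exp (-((1/2) * Real.log (p/(1-p)))) ≤ p * Real.exp (-x) :=
    mul_le_mul_of_nonneg_left (Real.exp_le_exp.2 (neg_le_neg hV)) (by linarith)
  have h2 : (1-p) * Real.exp x ≤ (1-p) * Real.exp ((1/2) * Real.log (p/(1-p))) :=
    mul_le_mul_of_nonneg_left (Real.exp_le_exp.2 hV) (by linarith)
  linarith [L_peV hp hp1, L_qeV hp hp1]

lemma L_hle (hp : 1/2 < p) (hp1 : p < 1) {x : ℝ} (h0 : 0 ≤ x)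
    (hV : x ≤ (1/2) * Real.log (p/(1-p))) :
    p * Real.exp (-x) - (1-p) * Real.exp x ≤ (1/2) * Real.log (p/(1-p)) - x := by
  set V := (1/2) * Real.log (p/(1-p)) with hVdef
  have hmono : MonotoneOn (fun y => (p * Real.exp (-y) - (1-p) * Real.exp y) + y)
      (Set.Icc 0 V) := by
    apply myMono' (f' := fun y => (-(p * Real.exp (-y)) - (1-p) * Real.exp y) + 1)
    · fun_prop
    · intro t ht
      have d1 : HasDerivAt (fun y : ℝ => Real.exp (-y)) (-Real.exp (-t)) t := by
        simpa using ((hasDerivAt_id t).neg.exp)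
      have d2 : HasDerivAt (fun y : ℝ => Real.exp y) (Real.exp t) t := Real.hasDerivAt_exp t
      have := ((d1.const_mul p).sub (d2.const_mul (1-p))).add (hasDerivAt_id t)
      refine this.congr_deriv ?_
      ring
    · intro t ht
      have := L_gle1 hp hp1 ht.1.le ht.2.le
      linarith
  have hVpos : 0 ≤ V := h0.trans hV
  have := hmono (Set.mem_Icc.2 ⟨h0, hV⟩) (Set.mem_Icc.2 ⟨hVpos, le_refl V⟩) hV
  simp only at this
  have hhV : p * Real.exp (-V) - (1-p) * Real.exp V = 0 := by
    rw [hVdef, L_peV hp hp1, L_qeV hp hp1]; ring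
  linarith

end PFacts
open Topology Filter in
set_option maxHeartbeats 2000000 in
/-- **Proposition 1, finite-time lower bound on the weight ratio.** -/
theorem stmt_16
    (D : ℕ) (hD : 0 < D) (p : ℝ) (hp : 1 / 2 < p) (hp1 : p < 1)
    (u : ℝ → ℝ) (v : Fin D → ℝ → ℝ)
    -- gradient-flow system on `[0, ∞)`
    (hu : ∀ t ∈ Set.Ici (0 : ℝ),
      HasDerivWithinAt u
        (Real.exp (-u t) * ∏ i, (p * Real.exp (-v i t) + (1 - p) * Real.exp (v i t)))
        (Set.Ici 0) t)
    (hv : ∀ (j : Fin D), ∀ t ∈ Set.Ici (0 : ℝ),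
      HasDerivWithinAt (v j)
        (Real.exp (-u t) * (p * Real.exp (-v j t) - (1 - p) * Real.exp (v j t)) *
          ∏ i ∈ Finset.univ.erase j,
            (p * Real.exp (-v i t) + (1 - p) * Real.exp (v i t)))
        (Set.Ici 0) t)
    (hu0 : 0 < u 0)
    (hv0 : ∀ j, 0 < v j 0 ∧ v j 0 < (1 / 2) * Real.log (p / (1 - p)))
    (T : ℝ) (hT : 0 < T) :
    ∀ t : ℝ, 0 < t → t < T →
      ((1 / 2) * Real.log (p / (1 - p)) +
          Real.log (Real.tanh (artanh (Real.sqrt ((1 - p) / p) * Real.exp (v ⟨0, hD⟩ 0)) +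
            Real.exp (-u T) * 2 ^ (D - 1) * (p * (1 - p)) ^ ((D : ℝ) / 2) * t))) /
        Real.log (Real.exp (u 0) +
          t * ∏ i, (p * Real.exp (-v i 0) + Real.sqrt (p * (1 - p))))
      < v ⟨0, hD⟩ t / u t
      ∧ 0 < v ⟨0, hD⟩ t / u t := by
  have hq : (0:ℝ) < 1 - p := by linarith
  have hp0 : (0:ℝ) < p := by linarith
  set j₁ : Fin D := ⟨0, hD⟩ with hj₁
  set V : ℝ := (1/2) * Real.log (p/(1-p)) with hVdef
  set s' : ℝ := Real.sqrt (p*(1-p)) with hs'def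
  have hs'pos : 0 < s' := Real.sqrt_pos.2 (by positivity)
  have hgpos : ∀ x : ℝ, 0 < p * Real.exp (-x) + (1-p) * Real.exp x := by
    intro x; positivity
  have hcv : ∀ i, ContinuousOn (v i) (Set.Ici 0) :=
    fun i t ht => (hv i t ht).continuousWithinAt
  have hcu : ContinuousOn u (Set.Ici 0) := fun t ht => (hu t ht).continuousWithinAt
  -- u is nondecreasing
  have humono : MonotoneOn u (Set.Ici 0) := by
    apply myMonoIci hu
    intro t _
    exact mul_nonneg (Real.exp_pos _).le (Finset.prod_nonneg fun i _ => (hgpos _).le)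
  have hu_ge : ∀ t, 0 ≤ t → u 0 ≤ u t := fun t ht =>
    humono (Set.mem_Ici.2 le_rfl) (Set.mem_Ici.2 ht) ht
  have hu_pos : ∀ t, 0 ≤ t → 0 < u t := fun t ht => lt_of_lt_of_le hu0 (hu_ge t ht)
  have hexpu_le : ∀ t, 0 ≤ t → Real.exp (-u t) ≤ 1 := by
    intro t ht
    calc Real.exp (-u t) ≤ Real.exp 0 := Real.exp_le_exp.2 (by linarith [hu_pos t ht])
    _ = 1 := Real.exp_zero
  -- Invariance: v i t < V for all t ≥ 0
  have inv : ∀ t, 0 ≤ t → ∀ i, v i t < V := by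
    by_contra hcon
    push_neg at hcon
    obtain ⟨t₁, ht₁, i₁, hi₁⟩ := hcon
    set S : Set ℝ := ⋃ i : Fin D, (Set.Ici (0:ℝ) ∩ v i ⁻¹' Set.Ici V) with hS
    have hSclosed : IsClosed S := isClosed_iUnion_of_finite fun i =>
      (hcv i).preimage_isClosed_of_isClosed isClosed_Ici isClosed_Ici
    have hSne : S.Nonempty := ⟨t₁, Set.mem_iUnion.2 ⟨i₁, ht₁, hi₁⟩⟩
    have hSbdd : BddBelow S := ⟨0, fun x hx => by
      obtain ⟨i, hxi⟩ := Set.mem_iUnion.1 hx; exact hxi.1⟩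
    set t₀ := sInf S with ht₀def
    have ht₀S : t₀ ∈ S := hSclosed.csInf_mem hSne hSbdd
    obtain ⟨j₀, hj₀mem⟩ := Set.mem_iUnion.1 ht₀S
    have ht₀0 : (0:ℝ) ≤ t₀ := hj₀mem.1
    have hj₀ : V ≤ v j₀ t₀ := hj₀mem.2
    have hlt : ∀ s, 0 ≤ s → s < t₀ → ∀ i, v i s < V := by
      intro s hs hst i
      by_contra hge
      push_neg at hge
      exact absurd (csInf_le hSbdd (Set.mem_iUnion.2 ⟨i, hs, hge⟩)) (not_le.2 hst)
    have ht₀pos : 0 < t₀ := by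
      rcases ht₀0.lt_or_eq with h | h
      · exact h
      · exfalso; rw [← h] at hj₀; exact absurd hj₀ (not_le.2 (hv0 j₀).2)
    have hle : ∀ i, ∀ s ∈ Set.Icc (0:ℝ) t₀, v i s ≤ V := by
      intro i s hs
      rcases lt_or_eq_of_le hs.2 with h | h
      · exact (hlt s hs.1 h i).le
      · rw [h]
        have hne : (𝓝[Set.Ico 0 t₀] t₀).NeBot := by
          apply mem_closure_iff_nhdsWithin_neBot.1
          rw [closure_Ico (show (0:ℝ) ≠ t₀ from ht₀pos.ne)]
          exact ⟨ht₀0, le_rfl⟩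
        have htend : Filter.Tendsto (v i) (𝓝[Set.Ico 0 t₀] t₀) (𝓝 (v i t₀)) :=
          ((hcv i) t₀ ht₀0).mono_left (nhdsWithin_mono _ (fun x hx => hx.1))
        exact le_of_tendsto htend (Filter.eventually_of_mem self_mem_nhdsWithin
          (fun x hx => (hlt x hx.1 hx.2 i).le))
    have hmono_v : ∀ i, MonotoneOn (v i) (Set.Icc 0 t₀) := by
      intro i
      apply myMonoIcc (hv i)
      intro x hx0 hxt
      exact mul_nonneg (mul_nonneg (Real.exp_pos _).le
          (L_hh_nonneg hp hp1 (hle i x ⟨hx0.le, hxt.le⟩)))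
        (Finset.prod_nonneg fun _ _ => (hgpos _).le)
    have hv_lb : ∀ i, ∀ s ∈ Set.Icc (0:ℝ) t₀, 0 < v i s := by
      intro i s hs
      exact lt_of_lt_of_le (hv0 i).1
        (hmono_v i (Set.mem_Icc.2 ⟨le_rfl, ht₀0⟩) hs hs.1)
    have hYmono : MonotoneOn (fun s => (V - v j₀ s) * Real.exp s) (Set.Icc 0 t₀) := by
      apply myMono' (f' := fun x => (V - v j₀ x -
        (Real.exp (-u x) * (p * Real.exp (-v j₀ x) - (1 - p) * Real.exp (v j₀ x)) *
          ∏ i ∈ Finset.univ.erase j₀,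
            (p * Real.exp (-v i x) + (1 - p) * Real.exp (v i x)))) * Real.exp x)
      · exact ((continuousOn_const.sub ((hcv j₀).mono Set.Icc_subset_Ici_self)).mul
          Real.continuous_exp.continuousOn)
      · intro x hx
        have hdv := (hv j₀ x hx.1.le).hasDerivAt (Ici_mem_nhds hx.1)
        have := ((hasDerivAt_const x V).sub hdv).mul (Real.hasDerivAt_exp x)
        refine this.congr_deriv ?_
        simp only [Pi.sub_apply]
        ring
      · intro x hx
        have hxIcc : x ∈ Set.Icc (0:ℝ) t₀ := ⟨hx.1.le, hx.2.le⟩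
        have b1 : Real.exp (-u x) ≤ 1 := hexpu_le x hx.1.le
        have b2 : (∏ i ∈ Finset.univ.erase j₀,
            (p * Real.exp (-v i x) + (1 - p) * Real.exp (v i x))) ≤ 1 :=
          Finset.prod_le_one (fun i _ => (hgpos _).le)
            (fun i _ => L_gle1 hp hp1 (hv_lb i x hxIcc).le (hle i x hxIcc))
        have b2' : (0:ℝ) ≤ ∏ i ∈ Finset.univ.erase j₀,
            (p * Real.exp (-v i x) + (1 - p) * Real.exp (v i x)) :=
          Finset.prod_nonneg fun _ _ => (hgpos _).le
        have b3 : 0 ≤ p * Real.exp (-v j₀ x) - (1 - p) * Real.exp (v j₀ x) :=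
          L_hh_nonneg hp hp1 (hle j₀ x hxIcc)
        have b4 : p * Real.exp (-v j₀ x) - (1 - p) * Real.exp (v j₀ x) ≤ V - v j₀ x :=
          L_hle hp hp1 (hv_lb j₀ x hxIcc).le (hle j₀ x hxIcc)
        have w'le : Real.exp (-u x) * (p * Real.exp (-v j₀ x) - (1 - p) * Real.exp (v j₀ x)) *
            (∏ i ∈ Finset.univ.erase j₀,
              (p * Real.exp (-v i x) + (1 - p) * Real.exp (v i x))) ≤ V - v j₀ x := by
          calc Real.exp (-u x) * (p * Real.exp (-v j₀ x) - (1 - p) * Real.exp (v j₀ x)) *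
              (∏ i ∈ Finset.univ.erase j₀,
                (p * Real.exp (-v i x) + (1 - p) * Real.exp (v i x)))
              ≤ Real.exp (-u x) * (p * Real.exp (-v j₀ x) - (1 - p) * Real.exp (v j₀ x)) * 1 :=
                mul_le_mul_of_nonneg_left b2 (mul_nonneg (Real.exp_pos _).le b3)
            _ = Real.exp (-u x) * (p * Real.exp (-v j₀ x) - (1 - p) * Real.exp (v j₀ x)) :=
                mul_one _
            _ ≤ 1 * (p * Real.exp (-v j₀ x) - (1 - p) * Real.exp (v j₀ x)) :=
                mul_le_mul_of_nonneg_right b1 b3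
            _ = p * Real.exp (-v j₀ x) - (1 - p) * Real.exp (v j₀ x) := one_mul _
            _ ≤ V - v j₀ x := b4
        exact mul_nonneg (by linarith) (Real.exp_pos _).le
    have h0mem : (0:ℝ) ∈ Set.Icc (0:ℝ) t₀ := ⟨le_rfl, ht₀0⟩
    have htmem : t₀ ∈ Set.Icc (0:ℝ) t₀ := ⟨ht₀0, le_rfl⟩
    have hcomp := hYmono h0mem htmem ht₀0
    simp only [Real.exp_zero, mul_one] at hcomp
    nlinarith [Real.exp_pos t₀, (hv0 j₀).2, hcomp, hj₀]
  -- monotonicity of each v i on [0, ∞)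
  have hmono_all : ∀ i, MonotoneOn (v i) (Set.Ici 0) := by
    intro i
    apply myMonoIci (hv i)
    intro x hx
    exact mul_nonneg (mul_nonneg (Real.exp_pos _).le
        (L_hh_nonneg hp hp1 (inv x hx.le i).le))
      (Finset.prod_nonneg fun _ _ => (hgpos _).le)
  have hv_ge0 : ∀ i t, 0 ≤ t → v i 0 ≤ v i t := fun i t ht =>
    hmono_all i (Set.mem_Ici.2 le_rfl) (Set.mem_Ici.2 ht) ht
  have hv_pos : ∀ i t, 0 ≤ t → 0 < v i t := fun i t ht =>
    lt_of_lt_of_le (hv0 i).1 (hv_ge0 i t ht)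
  have hNe : Nonempty (Fin D) := ⟨j₁⟩
  -- upper bound on exp (u t)
  set Cst : ℝ := ∏ i, (p * Real.exp (-v i 0) + s') with hCdef
  have hC_pos : 0 < Cst := Finset.prod_pos fun i _ => by positivity
  have hfactor : ∀ (i : Fin D) x, 0 ≤ x →
      p * Real.exp (-v i x) + (1 - p) * Real.exp (v i x) < p * Real.exp (-v i 0) + s' := by
    intro i x hx
    have h1 : p * Real.exp (-v i x) ≤ p * Real.exp (-v i 0) :=
      mul_le_mul_of_nonneg_left (Real.exp_le_exp.2 (neg_le_neg (hv_ge0 i x hx))) hp0.le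
    have h2 : (1 - p) * Real.exp (v i x) < s' := by
      have := mul_lt_mul_of_pos_left (Real.exp_lt_exp.2 (inv x hx i)) hq
      calc (1 - p) * Real.exp (v i x) < (1 - p) * Real.exp V := this
        _ = s' := by rw [hVdef, hs'def]; exact L_qeV hp hp1
    linarith
  have hψ : StrictMonoOn (fun s => Cst * s - Real.exp (u s)) (Set.Icc 0 T) := by
    apply myStrict' (f' := fun x =>
      Cst - ∏ i, (p * Real.exp (-v i x) + (1 - p) * Real.exp (v i x)))
    · exact (continuous_const.mul continuous_id).continuousOn.sub
        (Real.continuous_exp.comp_continuousOn (hcu.mono Set.Icc_subset_Ici_self))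
    · intro x hx
      have hdu := (hu x hx.1.le).hasDerivAt (Ici_mem_nhds hx.1)
      have h2 := hdu.exp
      have h3 := ((hasDerivAt_id x).const_mul Cst).sub h2
      refine h3.congr_deriv ?_
      rw [show Real.exp (u x) * (Real.exp (-u x) *
          ∏ i, (p * Real.exp (-v i x) + (1 - p) * Real.exp (v i x))) =
          (Real.exp (u x) * Real.exp (-u x)) *
          ∏ i, (p * Real.exp (-v i x) + (1 - p) * Real.exp (v i x)) from by ring,
        ← Real.exp_add, add_neg_cancel, Real.exp_zero, one_mul]
      ring
    · intro x hx
      rw [sub_pos, hCdef]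
      exact Finset.prod_lt_prod_of_nonempty (fun i _ => hgpos _)
        (fun i _ => hfactor i x hx.1.le) Finset.univ_nonempty
  have hexp_lt : ∀ t, 0 < t → t ≤ T → Real.exp (u t) < Real.exp (u 0) + Cst * t := by
    intro t h0t htT
    have := hψ (Set.mem_Icc.2 ⟨le_rfl, hT.le⟩) (Set.mem_Icc.2 ⟨h0t.le, htT⟩) h0t
    simp only [mul_zero, zero_sub, neg_lt_sub_iff_lt_add] at this
    linarith
  -- the comparison function F
  set A : ℝ := artanh (Real.sqrt ((1 - p) / p) * Real.exp (v j₁ 0)) with hAdef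
  set k : ℝ := Real.exp (-u T) * 2 ^ (D - 1) * (p * (1 - p)) ^ ((D : ℝ) / 2) with hkdef
  have hk_pos : 0 < k := by
    rw [hkdef]
    have : (0:ℝ) < (p * (1 - p)) ^ ((D : ℝ) / 2) := Real.rpow_pos_of_pos (by positivity) _
    positivity
  have hx₀ : Real.sqrt ((1 - p) / p) * Real.exp (v j₁ 0) = Real.exp (v j₁ 0 - V) := by
    rw [show v j₁ 0 - V = v j₁ 0 + -V from by ring, Real.exp_add, hVdef, L_eNegV hp hp1]
    ring
  have hq01 : ∀ t, 0 ≤ t → Real.exp (v j₁ t - V) < 1 := by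
    intro t ht
    calc Real.exp (v j₁ t - V) < Real.exp 0 := Real.exp_lt_exp.2 (by linarith [inv t ht j₁])
    _ = 1 := Real.exp_zero
  have hks : k = Real.exp (-u T) * ((2 * s') ^ (D - 1) * s') := by
    have hsD : s' ^ D = (p * (1 - p)) ^ ((D : ℝ) / 2) := by
      rw [hs'def, Real.sqrt_eq_rpow, ← Real.rpow_natCast ((p * (1 - p)) ^ ((1:ℝ)/2)) D,
        ← Real.rpow_mul (by positivity)]
      congr 1
      ring
    rw [hkdef, ← hsD, mul_pow, mul_assoc, mul_assoc, ← pow_succ,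
      Nat.sub_add_cancel hD]
  set F : ℝ → ℝ := fun t => artanh (Real.exp (v j₁ t - V)) - (A + k * t) with hFdef
  have hFmono : MonotoneOn F (Set.Icc 0 T) := by
    apply myMono' (f' := fun x =>
      1 / (1 - Real.exp (v j₁ x - V) ^ 2) * (Real.exp (v j₁ x - V) *
        (Real.exp (-u x) * (p * Real.exp (-v j₁ x) - (1 - p) * Real.exp (v j₁ x)) *
          ∏ i ∈ Finset.univ.erase j₁,
            (p * Real.exp (-v i x) + (1 - p) * Real.exp (v i x)))) - k)
    · intro x hx
      have hcw : ContinuousWithinAt (fun t => Real.exp (v j₁ t - V)) (Set.Icc 0 T) x :=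
        Real.continuous_exp.continuousAt.comp_continuousWithinAt
          ((((hcv j₁).mono Set.Icc_subset_Ici_self) x hx).sub continuousWithinAt_const)
      have h1 : -1 < Real.exp (v j₁ x - V) := by linarith [Real.exp_pos (v j₁ x - V)]
      have h2 : Real.exp (v j₁ x - V) < 1 := hq01 x hx.1
      have houter : ContinuousWithinAt (fun t => artanh (Real.exp (v j₁ t - V)))
          (Set.Icc 0 T) x :=
        (hasDerivAt_artanh h1 h2).continuousAt.tendsto.comp hcw
      exact houter.sub
        ((continuous_const.add (continuous_const.mul continuous_id)).continuousWithinAt)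
    · intro x hx
      have hdv := (hv j₁ x hx.1.le).hasDerivAt (Ici_mem_nhds hx.1)
      have hinner := (hdv.sub_const V).exp
      have h1 : -1 < Real.exp (v j₁ x - V) := by linarith [Real.exp_pos (v j₁ x - V)]
      have h2 : Real.exp (v j₁ x - V) < 1 := hq01 x hx.1.le
      have houter := (hasDerivAt_artanh h1 h2).comp x hinner
      have haff : HasDerivAt (fun t : ℝ => A + k * t) k x := by
        simpa using (((hasDerivAt_id x).const_mul k).const_add A)
      exact houter.sub haff
    · intro x hx
      set q := Real.exp (v j₁ x - V) with hqdef
      have hqpos : 0 < q := Real.exp_pos _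
      have hq1 : q < 1 := hq01 x hx.1.le
      have h1q2 : 0 < 1 - q ^ 2 := by nlinarith
      -- key identity : q * h = s' * (1 - q^2)
      have e1 : q * (p * Real.exp (-v j₁ x)) = s' := by
        rw [hqdef, show Real.exp (v j₁ x - V) * (p * Real.exp (-v j₁ x)) =
            p * (Real.exp (v j₁ x - V) * Real.exp (-v j₁ x)) from by ring,
          ← Real.exp_add, show v j₁ x - V + -v j₁ x = -V from by ring, hVdef, hs'def]
        exact L_peV hp hp1
      have e2 : q * ((1 - p) * Real.exp (v j₁ x)) = s' * q ^ 2 := by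
        rw [hqdef, show Real.exp (v j₁ x - V) * ((1 - p) * Real.exp (v j₁ x)) =
            (1 - p) * (Real.exp (v j₁ x - V) * Real.exp (v j₁ x)) from by ring,
          ← Real.exp_add,
          show v j₁ x - V + v j₁ x = V + ((v j₁ x - V) + (v j₁ x - V)) from by ring,
          Real.exp_add, Real.exp_add, ← mul_assoc, hVdef, hs'def, L_qeV hp hp1]
        ring
      have key1 : q * (p * Real.exp (-v j₁ x) - (1 - p) * Real.exp (v j₁ x)) =
          s' * (1 - q ^ 2) := by
        rw [mul_sub, e1, e2]; ring
      set P := ∏ i ∈ Finset.univ.erase j₁,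
        (p * Real.exp (-v i x) + (1 - p) * Real.exp (v i x)) with hPdef
      have hP_pos : 0 < P := Finset.prod_pos fun i _ => hgpos _
      have key2 : (2 * s') ^ (D - 1) ≤ P := by
        have := Finset.prod_le_prod (s := Finset.univ.erase j₁)
          (f := fun _ => 2 * s')
          (g := fun i => p * Real.exp (-v i x) + (1 - p) * Real.exp (v i x))
          (fun i _ => by positivity)
          (fun i _ => by rw [hs'def]; exact L_amgm hp hp1 (v i x))
        rwa [Finset.prod_const, Finset.card_erase_of_mem (Finset.mem_univ j₁),
          Finset.card_univ, Fintype.card_fin] at this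
      have key3 : Real.exp (-u T) ≤ Real.exp (-u x) := by
        apply Real.exp_le_exp.2
        have := humono (Set.mem_Ici.2 hx.1.le) (Set.mem_Ici.2 hT.le) hx.2.le
        linarith
      have hk_le : k ≤ Real.exp (-u x) * P * s' := by
        rw [hks]
        calc Real.exp (-u T) * ((2 * s') ^ (D - 1) * s')
            ≤ Real.exp (-u x) * ((2 * s') ^ (D - 1) * s') :=
              mul_le_mul_of_nonneg_right key3
                (mul_nonneg (pow_nonneg (by positivity) _) hs'pos.le)
          _ ≤ Real.exp (-u x) * (P * s') := by
              apply mul_le_mul_of_nonneg_left _ (Real.exp_pos _).le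
              exact mul_le_mul_of_nonneg_right key2 hs'pos.le
          _ = Real.exp (-u x) * P * s' := by ring
      have hsimp : 1 / (1 - q ^ 2) * (q *
          (Real.exp (-u x) * (p * Real.exp (-v j₁ x) - (1 - p) * Real.exp (v j₁ x)) * P)) =
          Real.exp (-u x) * P * s' := by
        rw [show q * (Real.exp (-u x) * (p * Real.exp (-v j₁ x) -
            (1 - p) * Real.exp (v j₁ x)) * P) = (Real.exp (-u x) * P) *
            (q * (p * Real.exp (-v j₁ x) - (1 - p) * Real.exp (v j₁ x))) from by ring,
          key1]
        field_simp
      rw [sub_nonneg, hsimp]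
      exact hk_le
  have hF0 : F 0 = 0 := by
    rw [hFdef]
    simp only [mul_zero, add_zero]
    rw [← hx₀, ← hAdef, sub_self]
  -- final bounds for given t
  intro t ht0 htT
  have hvt_pos : 0 < v j₁ t := hv_pos j₁ t ht0.le
  have hut_pos : 0 < u t := hu_pos t ht0.le
  have hratio_pos : 0 < v j₁ t / u t := div_pos hvt_pos hut_pos
  have hden_arg : 1 < Real.exp (u 0) + t * Cst := by
    have h1 : Real.exp 0 < Real.exp (u 0) := Real.exp_lt_exp.2 hu0
    rw [Real.exp_zero] at h1
    nlinarith [mul_pos ht0 hC_pos]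
  have hDen_pos : 0 < Real.log (Real.exp (u 0) + t * Cst) := Real.log_pos hden_arg
  have hu_lt : u t < Real.log (Real.exp (u 0) + t * Cst) := by
    have h1 := hexp_lt t ht0 htT.le
    have h2 := Real.log_lt_log (Real.exp_pos (u t))
      (show Real.exp (u t) < Real.exp (u 0) + t * Cst from by linarith [h1])
    rwa [Real.log_exp] at h2
  have hFt : 0 ≤ F t := by
    have := hFmono (Set.mem_Icc.2 ⟨le_rfl, hT.le⟩) (Set.mem_Icc.2 ⟨ht0.le, htT.le⟩) ht0.le
    rwa [hF0] at this
  have hArt : A + k * t ≤ artanh (Real.exp (v j₁ t - V)) := by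
    rw [hFdef] at hFt
    simp only at hFt
    linarith
  have hAkt_pos : 0 < A + k * t := by
    have hx₀pos : 0 < Real.sqrt ((1 - p) / p) * Real.exp (v j₁ 0) :=
      mul_pos (Real.sqrt_pos.2 (div_pos hq hp0)) (Real.exp_pos _)
    have hx₀lt1 : Real.sqrt ((1 - p) / p) * Real.exp (v j₁ 0) < 1 := by
      rw [hx₀]; exact hq01 0 le_rfl
    have hA_pos : 0 < A := by rw [hAdef]; exact artanh_pos hx₀pos hx₀lt1
    nlinarith [mul_pos hk_pos ht0]
  have hρpos : 0 < Real.tanh (A + k * t) := tanh_pos' hAkt_pos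
  have hρlt1 : Real.tanh (A + k * t) < 1 := tanh_lt_one' _
  have hρle : Real.tanh (A + k * t) ≤ Real.exp (v j₁ t - V) := by
    by_contra hgt
    push_neg at hgt
    have h1 : -1 < Real.exp (v j₁ t - V) := by linarith [Real.exp_pos (v j₁ t - V)]
    have := artanh_lt_artanh h1 hgt hρlt1
    rw [artanh_tanh] at this
    linarith
  have hN : V + Real.log (Real.tanh (A + k * t)) ≤ v j₁ t := by
    have h1 := Real.log_le_log hρpos hρle
    rw [Real.log_exp] at h1
    linarith
  refine ⟨?_, hratio_pos⟩
  set N := V + Real.log (Real.tanh (A + k * t)) with hNdef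
  set Den := Real.log (Real.exp (u 0) + t * Cst) with hDendef
  rcases le_or_gt N 0 with hN0 | hN0
  · have hle0 : N / Den ≤ 0 := by
      rw [div_nonpos_iff]
      exact Or.inr ⟨hN0, hDen_pos.le⟩
    exact lt_of_le_of_lt hle0 hratio_pos
  · calc N / Den < N / u t := div_lt_div_of_pos_left hN0 hut_pos hu_lt
      _ ≤ v j₁ t / u t := (div_le_div_iff_of_pos_right hut_pos).2 hN
end

section
/- (Proposition 1, strong-bias limit of the weight ratio) Fix initial values u_0 > 0 and v_{0,1}, …, v_{0,D} > 0, and fix 0 < t < T. For each p ∈ (1/2, 1) with v_{0,j} < (1/2)·log(p/(1-p)) for all j, let (u^p, v_1^p, …, v_D^p) be a solution of the gradient-flow system with u^p(0) = u_0 and v_j^p(0) = v_{0,j}. Then liminf_{p → 1⁻} v_1^p(t)/u^p(t) ≥ v_{0,1} / log( e^{u_0} + t · exp( -Σ_{j=1}^D v_{0,j} ) ); in particular this lower bound is positive. -/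
open Set Filter Real Topology

private lemma stmt17_key
    (D : ℕ)
    (u0 : ℝ) (hu0 : 0 < u0) (v0 : Fin D → ℝ) (hv0 : ∀ j, 0 < v0 j)
    (t : ℝ) (ht : 0 < t)
    (p : ℝ) (hp : 1 / 2 < p) (hp1 : p < 1)
    (hpv : ∀ j, v0 j < (1 / 2) * Real.log (p / (1 - p)))
    (u : ℝ → ℝ) (v : Fin D → ℝ → ℝ)
    (hU0 : u 0 = u0) (hV0 : ∀ j, v j 0 = v0 j)
    (hu' : ∀ s ∈ Set.Ici (0 : ℝ),
      HasDerivWithinAt u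
        (Real.exp (-u s) * ∏ i, (p * Real.exp (-v i s) + (1 - p) * Real.exp (v i s)))
        (Set.Ici 0) s)
    (hv' : ∀ (j : Fin D), ∀ s ∈ Set.Ici (0 : ℝ),
      HasDerivWithinAt (v j)
        (Real.exp (-u s) * (p * Real.exp (-v j s) - (1 - p) * Real.exp (v j s)) *
          ∏ i ∈ Finset.univ.erase j, (p * Real.exp (-v i s) + (1 - p) * Real.exp (v i s)))
        (Set.Ici 0) s) :
    ∀ j : Fin D,
      v0 j / Real.log (Real.exp u0 + t * ∏ i, (p * Real.exp (-v0 i) + (1 - p) * Real.exp (v0 i)))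
        ≤ v j t / u t ∧ v j t / u t ≤ 1 + v0 j / u0 := by
  have hp0 : 0 < p := lt_trans (by norm_num) hp
  have hq : 0 < 1 - p := by linarith
  have hA0 : 0 < p / (1 - p) := by positivity
  have vcont : ∀ j, ContinuousOn (v j) (Ici 0) := fun j s hs => (hv' j s hs).continuousWithinAt
  have ucont : ContinuousOn u (Ici 0) := fun s hs => (hu' s hs).continuousWithinAt
  have gpos : ∀ x : ℝ, 0 < p * Real.exp (-x) + (1 - p) * Real.exp x := by
    intro x
    have h1 := Real.exp_pos (-x); have h2 := Real.exp_pos x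
    nlinarith
  -- invariance: v j stays strictly below the equilibrium
  have inv : ∀ j, ∀ s ∈ Ici (0:ℝ), Real.exp (2 * v j s) < p / (1 - p) := by
    intro j
    by_contra hcon
    push_neg at hcon
    obtain ⟨s₀, hs₀, hρ₀⟩ := hcon
    set ρ : ℝ → ℝ := fun s => p / (1 - p) - Real.exp (2 * v j s) with hρdef
    have hρ0pos : 0 < ρ 0 := by
      have hlt : Real.exp (2 * v j 0) < p / (1 - p) := by
        rw [hV0 j]
        calc Real.exp (2 * v0 j) < Real.exp (Real.log (p / (1 - p))) :=
              Real.exp_lt_exp.2 (by have := hpv j; linarith)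
          _ = p / (1 - p) := Real.exp_log hA0
      simpa [hρdef] using sub_pos.2 hlt
    have hρcont : ContinuousOn ρ (Ici 0) := by
      apply continuousOn_const.sub
      exact Real.continuous_exp.comp_continuousOn (continuousOn_const.mul (vcont j))
    set S : Set ℝ := Icc 0 s₀ ∩ ρ ⁻¹' Iic 0 with hSdef
    have hSne : S.Nonempty := ⟨s₀, ⟨hs₀, le_rfl⟩, by simpa [hρdef] using sub_nonpos.2 hρ₀⟩
    have hSclosed : IsClosed S :=
      (hρcont.mono Icc_subset_Ici_self).preimage_isClosed_of_isClosed isClosed_Icc isClosed_Iic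
    have hSbdd : BddBelow S := ⟨0, fun x hx => hx.1.1⟩
    set s₁ := sInf S with hs₁def
    have hs₁S : s₁ ∈ S := hSclosed.csInf_mem hSne hSbdd
    have hs₁0 : 0 ≤ s₁ := hs₁S.1.1
    have hs₁le : ρ s₁ ≤ 0 := hs₁S.2
    have hs₁pos : 0 < s₁ := by
      rcases hs₁0.lt_or_eq with h | h
      · exact h
      · exfalso
        have h2 := hs₁le
        rw [← h] at h2
        linarith
    have hbefore : ∀ s ∈ Ico (0:ℝ) s₁, 0 < ρ s := by
      intro s hs
      by_contra hle
      push_neg at hle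
      have hmem : s ∈ S := ⟨⟨hs.1, le_trans hs.2.le hs₁S.1.2⟩, hle⟩
      exact absurd (csInf_le hSbdd hmem) (not_le.2 hs.2)
    have hρs₁ : ρ s₁ = 0 := by
      refine le_antisymm hs₁le ?_
      have htend : Tendsto ρ (𝓝[Ioo 0 s₁] s₁) (𝓝 (ρ s₁)) :=
        (hρcont s₁ hs₁0).mono (fun x hx => le_of_lt hx.1)
      have hev : ∀ᶠ s in 𝓝[Ioo 0 s₁] s₁, 0 ≤ ρ s := by
        filter_upwards [eventually_mem_nhdsWithin] with s hsm
        exact (hbefore s ⟨hsm.1.le, hsm.2⟩).le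
      have : (𝓝[Ioo 0 s₁] s₁).NeBot := by
        rw [nhdsWithin_Ioo_eq_nhdsLT hs₁pos]
        infer_instance
      exact ge_of_tendsto htend hev
    set K : ℝ → ℝ := fun s => 2 * (1 - p) * Real.exp (v j s - u s) *
        ∏ i ∈ Finset.univ.erase j, (p * Real.exp (-v i s) + (1 - p) * Real.exp (v i s)) with hKdef
    have hKnn : ∀ s : ℝ, 0 ≤ K s := by
      intro s
      apply mul_nonneg (mul_nonneg (by linarith) (Real.exp_pos _).le)
      exact Finset.prod_nonneg fun i _ => (gpos _).le
    have hKcont : ContinuousOn K (Icc 0 s₁) := by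
      apply ContinuousOn.mul
      · exact continuousOn_const.mul
          (Real.continuous_exp.comp_continuousOn
            (((vcont j).mono Icc_subset_Ici_self).sub (ucont.mono Icc_subset_Ici_self)))
      · apply continuousOn_finset_prod
        intro i _
        exact (continuousOn_const.mul
            (Real.continuous_exp.comp_continuousOn ((vcont i).mono Icc_subset_Ici_self).neg)).add
          (continuousOn_const.mul
            (Real.continuous_exp.comp_continuousOn ((vcont i).mono Icc_subset_Ici_self)))
    obtain ⟨z, hz, hzmax⟩ := isCompact_Icc.exists_isMaxOn (nonempty_Icc.2 hs₁0) hKcont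
    set M := K z with hMdef
    have main : ∀ τ ∈ Icc (0:ℝ) s₁, ‖ρ (s₁ - τ)‖ ≤ gronwallBound 0 M 0 (τ - 0) := by
      apply norm_le_gronwallBound_of_norm_deriv_right_le
        (f := fun τ => ρ (s₁ - τ)) (f' := fun τ => K (s₁ - τ) * ρ (s₁ - τ))
      · apply hρcont.comp (continuous_const.sub continuous_id).continuousOn
        intro τ hτ
        exact sub_nonneg.2 hτ.2
      · intro τ hτ
        have hspos : 0 < s₁ - τ := sub_pos.2 hτ.2
        have hvd : HasDerivAt (v j)
            (Real.exp (-u (s₁ - τ)) * (p * Real.exp (-v j (s₁ - τ)) - (1 - p) * Real.exp (v j (s₁ - τ))) *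
              ∏ i ∈ Finset.univ.erase j,
                (p * Real.exp (-v i (s₁ - τ)) + (1 - p) * Real.exp (v i (s₁ - τ)))) (s₁ - τ) :=
          (hv' j (s₁ - τ) hspos.le).hasDerivAt (Ici_mem_nhds hspos)
        have hρd : HasDerivAt ρ
            (-(Real.exp (2 * v j (s₁ - τ)) *
              (2 * (Real.exp (-u (s₁ - τ)) * (p * Real.exp (-v j (s₁ - τ)) - (1 - p) * Real.exp (v j (s₁ - τ))) *
                ∏ i ∈ Finset.univ.erase j,
                  (p * Real.exp (-v i (s₁ - τ)) + (1 - p) * Real.exp (v i (s₁ - τ))))))) (s₁ - τ) :=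
          ((hvd.const_mul 2).exp).const_sub _
        have hid : -(Real.exp (2 * v j (s₁ - τ)) *
              (2 * (Real.exp (-u (s₁ - τ)) * (p * Real.exp (-v j (s₁ - τ)) - (1 - p) * Real.exp (v j (s₁ - τ))) *
                ∏ i ∈ Finset.univ.erase j,
                  (p * Real.exp (-v i (s₁ - τ)) + (1 - p) * Real.exp (v i (s₁ - τ))))))
            = -(K (s₁ - τ) * ρ (s₁ - τ)) := by
          have e1 : Real.exp (2 * v j (s₁ - τ)) = Real.exp (v j (s₁ - τ)) * Real.exp (v j (s₁ - τ)) := by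
            rw [← Real.exp_add, two_mul]
          have e2 : Real.exp (-v j (s₁ - τ)) = (Real.exp (v j (s₁ - τ)))⁻¹ := Real.exp_neg _
          have e3 : Real.exp (v j (s₁ - τ) - u (s₁ - τ))
              = Real.exp (v j (s₁ - τ)) * Real.exp (-u (s₁ - τ)) := by
            rw [← Real.exp_add]; ring_nf
          simp only [hρdef, hKdef, e1, e2, e3]
          have hexpne : Real.exp (v j (s₁ - τ)) ≠ 0 := Real.exp_ne_zero _
          field_simp
        rw [hid] at hρd
        have hsub : HasDerivAt (fun τ : ℝ => s₁ - τ) (-1) τ := (hasDerivAt_id τ).const_sub s₁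
        have hfd := hρd.comp τ hsub
        simp only [Function.comp_def] at hfd
        have heq : -(K (s₁ - τ) * ρ (s₁ - τ)) * (-1) = K (s₁ - τ) * ρ (s₁ - τ) := by ring
        rw [heq] at hfd
        exact hfd.hasDerivWithinAt
      · simp [hρs₁]
      · intro τ hτ
        have hmem : s₁ - τ ∈ Icc (0:ℝ) s₁ := ⟨sub_nonneg.2 hτ.2.le, sub_le_self _ hτ.1⟩
        rw [norm_mul, Real.norm_of_nonneg (hKnn _), add_zero]
        exact mul_le_mul_of_nonneg_right (hzmax hmem) (norm_nonneg _)
    have hfinal := main s₁ ⟨hs₁0, le_rfl⟩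
    rw [sub_self, sub_zero, gronwallBound_ε0, zero_mul] at hfinal
    have : ρ 0 = 0 := by
      have := norm_le_zero_iff.1 hfinal
      exact this
    linarith
  -- monotonicity of each v j
  have hvda : ∀ (j : Fin D) (s : ℝ), 0 < s → HasDerivAt (v j)
      (Real.exp (-u s) * (p * Real.exp (-v j s) - (1 - p) * Real.exp (v j s)) *
        ∏ i ∈ Finset.univ.erase j, (p * Real.exp (-v i s) + (1 - p) * Real.exp (v i s))) s :=
    fun j s hs => (hv' j s hs.le).hasDerivAt (Ici_mem_nhds hs)
  have huda : ∀ s : ℝ, 0 < s → HasDerivAt u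
      (Real.exp (-u s) * ∏ i, (p * Real.exp (-v i s) + (1 - p) * Real.exp (v i s))) s :=
    fun s hs => (hu' s hs.le).hasDerivAt (Ici_mem_nhds hs)
  have vmono : ∀ j, MonotoneOn (v j) (Ici 0) := by
    intro j
    apply monotoneOn_of_deriv_nonneg (convex_Ici 0) (vcont j)
    · intro s hs
      rw [interior_Ici] at hs
      exact ((hvda j s hs).differentiableAt).differentiableWithinAt
    · intro s hs
      rw [interior_Ici] at hs
      rw [(hvda j s hs).deriv]
      refine mul_nonneg (mul_nonneg (Real.exp_pos _).le ?_)
        (Finset.prod_nonneg fun i _ => (gpos _).le)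
      have hev := Real.exp_pos (v j s)
      have h2' : Real.exp (v j s) * Real.exp (v j s) ≤ p / (1 - p) := by
        rw [← Real.exp_add, ← two_mul]; exact (inv j s (mem_Ici.2 hs.le)).le
      rw [le_div_iff₀ hq] at h2'
      rw [Real.exp_neg, sub_nonneg, ← div_eq_mul_inv, le_div_iff₀ hev]
      nlinarith
  have umono : MonotoneOn u (Ici 0) := by
    apply monotoneOn_of_deriv_nonneg (convex_Ici 0) ucont
    · intro s hs
      rw [interior_Ici] at hs
      exact ((huda s hs).differentiableAt).differentiableWithinAt
    · intro s hs
      rw [interior_Ici] at hs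
      rw [(huda s hs).deriv]
      exact mul_nonneg (Real.exp_pos _).le (Finset.prod_nonneg fun i _ => (gpos _).le)
  have vlow : ∀ j, ∀ s ∈ Icc (0:ℝ) t, v0 j ≤ v j s := by
    intro j s hs
    have := vmono j (self_mem_Ici) (mem_Ici.2 hs.1) hs.1
    rwa [hV0 j] at this
  have hut : u0 ≤ u t := by
    have := umono (self_mem_Ici) (mem_Ici.2 ht.le) ht.le
    rwa [hU0] at this
  have upos : 0 < u t := lt_of_lt_of_le hu0 hut
  set B := ∏ i, (p * Real.exp (-v0 i) + (1 - p) * Real.exp (v0 i)) with hBdef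
  have hBpos : 0 < B := Finset.prod_pos fun i _ => gpos _
  -- pointwise bound on the factors
  have hgle : ∀ i, ∀ s ∈ Icc (0:ℝ) t, p * Real.exp (-v i s) + (1 - p) * Real.exp (v i s)
      ≤ p * Real.exp (-v0 i) + (1 - p) * Real.exp (v0 i) := by
    intro i s hs
    have hab : Real.exp (v0 i) ≤ Real.exp (v i s) := Real.exp_le_exp.2 (vlow i s hs)
    have hA2 : Real.exp (v i s) * Real.exp (v0 i) ≤ p / (1 - p) := by
      calc Real.exp (v i s) * Real.exp (v0 i)
          ≤ Real.exp (v i s) * Real.exp (v i s) := by nlinarith [Real.exp_pos (v i s)]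
        _ = Real.exp (2 * v i s) := by rw [← Real.exp_add, ← two_mul]
        _ ≤ p / (1 - p) := (inv i s hs.1).le
    have ha : (0:ℝ) < Real.exp (v0 i) := Real.exp_pos _
    have hb : (0:ℝ) < Real.exp (v i s) := Real.exp_pos _
    have key : Real.exp (v i s) * Real.exp (v0 i) * (1 - p) ≤ p := (le_div_iff₀ hq).1 hA2
    rw [Real.exp_neg, Real.exp_neg, ← sub_nonneg]
    set a := Real.exp (v0 i)
    set b := Real.exp (v i s)
    have expand : p * a⁻¹ + (1 - p) * a - (p * b⁻¹ + (1 - p) * b)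
        = (b - a) * (p - (1 - p) * (a * b)) / (a * b) := by
      field_simp
      ring
    rw [expand]
    apply div_nonneg _ (by positivity)
    apply mul_nonneg (by linarith)
    nlinarith
  have fbound : Real.exp (u t) ≤ Real.exp u0 + B * t := by
    have key := norm_image_sub_le_of_norm_deriv_right_le_segment
      (f := fun s => Real.exp (u s))
      (f' := fun s => ∏ i, (p * Real.exp (-v i s) + (1 - p) * Real.exp (v i s))) (C := B)
      (a := 0) (b := t)
      (Real.continuous_exp.comp_continuousOn (ucont.mono Icc_subset_Ici_self))
      (by
        intro s hs
        have hd := ((hu' s hs.1).exp).mono (Ici_subset_Ici.2 hs.1)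
        convert hd using 1
        rw [← mul_assoc, ← Real.exp_add, add_neg_cancel, Real.exp_zero, one_mul])
      (by
        intro s hs
        rw [Real.norm_of_nonneg (Finset.prod_nonneg fun i _ => (gpos _).le)]
        exact Finset.prod_le_prod (fun i _ => (gpos _).le)
          (fun i _ => hgle i s ⟨hs.1, hs.2.le⟩))
      t (right_mem_Icc.2 ht.le)
    simp only [hU0, sub_zero, Real.norm_eq_abs] at key
    have h1 : Real.exp (u t) - Real.exp u0 ≤ B * t := (le_abs_self _).trans key
    linarith
  have hargpos : 0 < Real.exp u0 + t * B := by positivity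
  have ulog : u t ≤ Real.log (Real.exp u0 + t * B) := by
    rw [Real.le_log_iff_exp_le hargpos]
    linarith
  intro j
  have hvj : v0 j ≤ v j t := vlow j t ⟨ht.le, le_rfl⟩
  refine ⟨div_le_div₀ (le_trans (hv0 j).le hvj) hvj upos ulog, ?_⟩
  -- upper bound on the ratio: u - v j is monotone
  have dmono : MonotoneOn (fun s => u s - v j s) (Ici 0) := by
    apply monotoneOn_of_deriv_nonneg (convex_Ici 0) (ucont.sub (vcont j))
    · intro s hs
      rw [interior_Ici] at hs
      exact (((huda s hs).sub (hvda j s hs)).differentiableAt).differentiableWithinAt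
    · intro s hs
      rw [interior_Ici] at hs
      rw [((huda s hs).sub (hvda j s hs)).deriv]
      have hPnn : (0:ℝ) ≤ ∏ i ∈ Finset.univ.erase j,
          (p * Real.exp (-v i s) + (1 - p) * Real.exp (v i s)) :=
        Finset.prod_nonneg fun i _ => (gpos _).le
      rw [← Finset.mul_prod_erase Finset.univ _ (Finset.mem_univ j)]
      have hfact : Real.exp (-u s) * ((p * Real.exp (-v j s) + (1 - p) * Real.exp (v j s)) *
            ∏ i ∈ Finset.univ.erase j, (p * Real.exp (-v i s) + (1 - p) * Real.exp (v i s)))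
          - Real.exp (-u s) * (p * Real.exp (-v j s) - (1 - p) * Real.exp (v j s)) *
            ∏ i ∈ Finset.univ.erase j, (p * Real.exp (-v i s) + (1 - p) * Real.exp (v i s))
          = Real.exp (-u s) * (∏ i ∈ Finset.univ.erase j,
              (p * Real.exp (-v i s) + (1 - p) * Real.exp (v i s)))
            * (2 * (1 - p) * Real.exp (v j s)) := by ring
      rw [hfact]
      positivity
  have dbound : u0 - v0 j ≤ u t - v j t := by
    have := dmono (self_mem_Ici) (mem_Ici.2 ht.le) ht.le
    simpa [hU0, hV0 j] using this
  have hvu : v j t ≤ u t + v0 j := by linarith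
  rw [div_le_iff₀ upos]
  have hstep : v0 j ≤ (v0 j / u0) * u t := by
    rw [div_mul_eq_mul_div, le_div_iff₀ hu0]
    nlinarith [hv0 j]
  nlinarith

/-- **Proposition 1, strong-bias limit of the weight ratio.** For each
`p ∈ (1/2, 1)` with admissible initial data, `(U p, V p ·)` solves the gradient-flow
system with parameter `p` and initial values `(u₀, v₀)`. Then the liminf as `p → 1⁻`
of the weight ratio at time `t` is at least
`v₀ 1 / log(e^{u₀} + t·exp(-Σ_j v₀ j))`, which is positive. -/
theorem stmt_17
    (D : ℕ) (hD : 0 < D)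
    (u0 : ℝ) (hu0 : 0 < u0) (v0 : Fin D → ℝ) (hv0 : ∀ j, 0 < v0 j)
    (t T : ℝ) (ht : 0 < t) (htT : t < T)
    (U : ℝ → ℝ → ℝ) (V : ℝ → Fin D → ℝ → ℝ)
    (hsol : ∀ p : ℝ, 1 / 2 < p → p < 1 →
      (∀ j, v0 j < (1 / 2) * Real.log (p / (1 - p))) →
      U p 0 = u0 ∧ (∀ j, V p j 0 = v0 j) ∧
      (∀ s ∈ Set.Ici (0 : ℝ),
        HasDerivWithinAt (U p)
          (Real.exp (-U p s) *
            ∏ i, (p * Real.exp (-V p i s) + (1 - p) * Real.exp (V p i s)))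
          (Set.Ici 0) s) ∧
      (∀ (j : Fin D), ∀ s ∈ Set.Ici (0 : ℝ),
        HasDerivWithinAt (V p j)
          (Real.exp (-U p s) *
            (p * Real.exp (-V p j s) - (1 - p) * Real.exp (V p j s)) *
            ∏ i ∈ Finset.univ.erase j,
              (p * Real.exp (-V p i s) + (1 - p) * Real.exp (V p i s)))
          (Set.Ici 0) s)) :
    v0 ⟨0, hD⟩ / Real.log (Real.exp u0 + t * Real.exp (-∑ j, v0 j)) ≤
      Filter.liminf (fun p => V p ⟨0, hD⟩ t / U p t) (nhdsWithin 1 (Set.Iio 1)) ∧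
    0 < v0 ⟨0, hD⟩ / Real.log (Real.exp u0 + t * Real.exp (-∑ j, v0 j)) := by
  have hexpsum : Real.exp (-∑ j, v0 j) = ∏ i, Real.exp (-v0 i) := by
    rw [← Real.exp_sum, ← Finset.sum_neg_distrib]
  have hargpos : (1:ℝ) < Real.exp u0 + t * Real.exp (-∑ j, v0 j) := by
    have h1 : (1:ℝ) < Real.exp u0 := by
      rw [show (1:ℝ) = Real.exp 0 from (Real.exp_zero).symm]
      exact Real.exp_lt_exp.2 hu0
    nlinarith [Real.exp_pos (-∑ j, v0 j)]
  have hlogpos : 0 < Real.log (Real.exp u0 + t * Real.exp (-∑ j, v0 j)) := Real.log_pos hargpos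
  set j0 : Fin D := ⟨0, hD⟩ with hj0
  set L := v0 j0 / Real.log (Real.exp u0 + t * Real.exp (-∑ j, v0 j)) with hL
  have hLpos : 0 < L := div_pos (hv0 j0) hlogpos
  refine ⟨?_, hLpos⟩
  set B : ℝ → ℝ := fun p => ∏ i, (p * Real.exp (-v0 i) + (1 - p) * Real.exp (v0 i)) with hBdef
  have hBcont : Continuous B := by
    apply continuous_finset_prod
    intro i _
    exact ((continuous_id.mul continuous_const).add
      ((continuous_const.sub continuous_id).mul continuous_const))
  have hB1 : B 1 = Real.exp (-∑ j, v0 j) := by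
    simp [hBdef, hexpsum]
  have hBtend : Filter.Tendsto B (nhdsWithin 1 (Set.Iio 1)) (nhds (Real.exp (-∑ j, v0 j))) := by
    rw [← hB1]
    exact (hBcont.tendsto 1).mono_left nhdsWithin_le_nhds
  set Φ : ℝ → ℝ := fun p => v0 j0 / Real.log (Real.exp u0 + t * B p) with hΦ
  have hΦtend : Filter.Tendsto Φ (nhdsWithin 1 (Set.Iio 1)) (nhds L) := by
    apply Filter.Tendsto.div tendsto_const_nhds
    · exact (Real.continuousAt_log (by positivity)).tendsto.comp
        (tendsto_const_nhds.add (hBtend.const_mul t))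
    · exact ne_of_gt hlogpos
  have hev : ∀ᶠ p in nhdsWithin 1 (Set.Iio 1), ∀ j,
      v0 j / Real.log (Real.exp u0 + t * B p) ≤ V p j t / U p t ∧
      V p j t / U p t ≤ 1 + v0 j / u0 := by
    have h1 : ∀ᶠ p : ℝ in nhdsWithin 1 (Set.Iio 1), 1 / 2 < p :=
      eventually_nhdsWithin_of_eventually_nhds (eventually_gt_nhds (by norm_num))
    have h2 : ∀ᶠ p : ℝ in nhdsWithin 1 (Set.Iio 1), p < 1 := eventually_mem_nhdsWithin
    have h3 : Filter.Tendsto (fun p : ℝ => (1 / 2 : ℝ) * Real.log (p / (1 - p)))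
        (nhdsWithin 1 (Set.Iio 1)) Filter.atTop := by
      have hinv : Filter.Tendsto (fun p : ℝ => 1 - p) (nhdsWithin 1 (Set.Iio 1))
          (nhdsWithin 0 (Set.Ioi 0)) := by
        rw [tendsto_nhdsWithin_iff]
        constructor
        · have hcc : Continuous (fun p : ℝ => 1 - p) := continuous_const.sub continuous_id
          have hc : Filter.Tendsto (fun p : ℝ => 1 - p) (nhds 1) (nhds 0) := by
            simpa using hcc.tendsto (1:ℝ)
          exact hc.mono_left nhdsWithin_le_nhds
        · filter_upwards [eventually_mem_nhdsWithin] with p hp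
          exact Set.mem_Ioi.2 (by linarith [Set.mem_Iio.1 hp])
      have hdiv : Filter.Tendsto (fun p : ℝ => p / (1 - p)) (nhdsWithin 1 (Set.Iio 1))
          Filter.atTop := by
        have hmul : Filter.Tendsto (fun p : ℝ => p * (1 - p)⁻¹) (nhdsWithin 1 (Set.Iio 1))
            Filter.atTop :=
          Filter.Tendsto.pos_mul_atTop one_pos
            (Filter.tendsto_id.mono_right nhdsWithin_le_nhds)
            (tendsto_inv_nhdsGT_zero.comp hinv)
        simpa [div_eq_mul_inv] using hmul
      exact (Real.tendsto_log_atTop.comp hdiv).const_mul_atTop (by norm_num)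
    have h4 : ∀ᶠ p : ℝ in nhdsWithin 1 (Set.Iio 1), ∀ j, v0 j < (1 / 2) * Real.log (p / (1 - p)) := by
      rw [Filter.eventually_all]
      intro j
      exact h3.eventually_gt_atTop (v0 j)
    filter_upwards [h1, h2, h4] with p hp1 hp2 hp4
    exact fun j => stmt17_key D u0 hu0 v0 hv0 t ht p hp1 hp2 hp4 (U p) (V p)
      (hsol p hp1 hp2 hp4).1 (hsol p hp1 hp2 hp4).2.1 (hsol p hp1 hp2 hp4).2.2.1
      (hsol p hp1 hp2 hp4).2.2.2 j
  have hbd : Filter.IsBoundedUnder (· ≥ ·) (nhdsWithin (1:ℝ) (Set.Iio 1)) Φ := by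
    refine ⟨L - 1, ?_⟩
    rw [Filter.eventually_map]
    exact hΦtend.eventually (eventually_ge_nhds (by linarith : L - 1 < L))
  have hco : Filter.IsCoboundedUnder (· ≥ ·) (nhdsWithin (1:ℝ) (Set.Iio 1))
      (fun p => V p j0 t / U p t) := by
    exact Filter.isCoboundedUnder_ge_of_eventually_le _ (x := 1 + v0 j0 / u0)
      (hev.mono fun p hp => (hp j0).2)
  calc L = Filter.liminf Φ (nhdsWithin 1 (Set.Iio 1)) := hΦtend.liminf_eq.symm
    _ ≤ Filter.liminf (fun p => V p j0 t / U p t) (nhdsWithin 1 (Set.Iio 1)) :=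
        Filter.liminf_le_liminf (by filter_upwards [hev] with p hp; exact (hp j0).1) hbd hco
end

section
/- (Lemma 1, cross-environment alignment) Let X^b and X^d be independent, where X^b has spurious-feature parameter p^b and X^d has parameter p^d = 1/2, both with the same class label y. Then the expected cosine similarity of their embeddings satisfies E[ ⟨W·X^b, W·X^d⟩ / (‖W·X^b‖·‖W·X^d‖) ] = 1/(D+1). -/
open MeasureTheory Finset


lemma aux_sum_prod {D : ℕ} (f : Fin D → Bool → ℝ) :
    ∑ ε : Fin D → Bool, ∏ i, f i (ε i) = ∏ i, (f i true + f i false) := by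
  classical
  rw [show (∏ i, (f i true + f i false)) = ∏ i, ∑ b : Bool, f i b by simp,
    Finset.prod_univ_sum, Fintype.piFinset_univ]

lemma aux_dot {D Q : ℕ} (W : Matrix (Fin Q) (Fin (D+1)) ℝ) (hW : W.transpose * W = 1)
    (x x' : Fin (D+1) → ℝ) :
    dotProduct (W.mulVec x) (W.mulVec x') = dotProduct x x' := by
  rw [Matrix.dotProduct_mulVec]
  have h1 : W.mulVec x = Matrix.vecMul x W.transpose := by
    rw [Matrix.vecMul_transpose]
  rw [h1, Matrix.vecMul_vecMul, hW, Matrix.vecMul_one]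



/-- **Lemma 1, cross-environment alignment.** `Xb` (parameter `p^b`)
and `Xd` (parameter `p^d = 1/2`) are independent random `{-1,1}`-vectors with the same
label `y`: the first coordinate is `y` and the remaining `D` coordinates are i.i.d.,
equal to `y` with the given probability. Then the expected cosine similarity of the
embeddings `W·Xb` and `W·Xd` equals `1/(D+1)`. -/
theorem stmt_18
    {Ω : Type*} [MeasurableSpace Ω] (μ : MeasureTheory.Measure Ω)
    [MeasureTheory.IsProbabilityMeasure μ]
    (D Q : ℕ) (hD : 0 < D) (hQ : D + 1 ≤ Q)
    (pb : ℝ) (hpb : 1 / 2 ≤ pb) (hpb1 : pb ≤ 1)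
    (y : ℝ) (hy : y = 1 ∨ y = -1)
    -- `W` is semi-orthogonal: `Wᵀ W = I`
    (W : Matrix (Fin Q) (Fin (D + 1)) ℝ) (hW : W.transpose * W = 1)
    (Xb Xd : Ω → (Fin (D + 1) → ℝ))
    (hXb : Measurable Xb) (hXd : Measurable Xd)
    -- joint law: `Xb` and `Xd` independent; spurious coordinates of `Xb` i.i.d. equal
    -- to `y` with probability `pb`; those of `Xd` i.i.d. equal to `y` with probability `1/2`.
    (hlaw : ∀ (ε δ : Fin D → Bool),
      μ {ω | Xb ω = Fin.cons y (fun i => if ε i then y else -y) ∧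
             Xd ω = Fin.cons y (fun i => if δ i then y else -y)} =
        ENNReal.ofReal ((∏ i, (if ε i then pb else 1 - pb)) * (1 / 2) ^ D)) :
    ∫ ω, (dotProduct (W.mulVec (Xb ω)) (W.mulVec (Xd ω))) /
        (Real.sqrt (∑ q, (W.mulVec (Xb ω)) q ^ 2) *
         Real.sqrt (∑ q, (W.mulVec (Xd ω)) q ^ 2)) ∂μ
      = 1 / ((D : ℝ) + 1) := by
  classical
  have hy2 : y * y = 1 := by rcases hy with h | h <;> simp [h]
  have hyne : y ≠ -y := by rcases hy with h | h <;> norm_num [h]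
  set v : (Fin D → Bool) → (Fin (D + 1) → ℝ) :=
    fun ε => Fin.cons y (fun i => if ε i then y else -y) with hv
  have hterm : ∀ a b : Bool,
      (if a then y else -y) * (if b then y else -y) = (if a = b then (1:ℝ) else -1) := by
    intro a b; cases a <;> cases b <;> simp [hy2, mul_neg, neg_mul]
  have hdotv : ∀ ε δ, dotProduct (v ε) (v δ)
      = 1 + ∑ i, (if ε i = δ i then (1:ℝ) else -1) := by
    intro ε δ
    simp only [dotProduct, hv, Fin.sum_univ_succ, Fin.cons_zero, Fin.cons_succ, hy2]
    congr 1
    exact Finset.sum_congr rfl fun i _ => hterm (ε i) (δ i)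
  have hsq : ∀ x : Fin (D+1) → ℝ,
      ∑ q, (W.mulVec x) q ^ 2 = dotProduct (W.mulVec x) (W.mulVec x) := by
    intro x; simp [dotProduct, sq]
  have hnorm : ∀ ε, ∑ q, (W.mulVec (v ε)) q ^ 2 = (D : ℝ) + 1 := by
    intro ε
    rw [hsq, aux_dot W hW, hdotv ε ε]
    simp [add_comm]
  have hDpos : (0:ℝ) < (D : ℝ) + 1 := by positivity
  set S : (Fin D → Bool) → (Fin D → Bool) → ℝ :=
    fun ε δ => ∑ i, (if ε i = δ i then (1:ℝ) else -1) with hS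
  set c : (Fin D → Bool) × (Fin D → Bool) → ℝ :=
    fun p => (1 + S p.1 p.2) / ((D : ℝ) + 1) with hc
  set A : (Fin D → Bool) × (Fin D → Bool) → Set Ω :=
    fun p => {ω | Xb ω = v p.1 ∧ Xd ω = v p.2} with hA
  have hmeas : ∀ p, MeasurableSet (A p) := by
    intro p
    have : A p = Xb ⁻¹' {v p.1} ∩ Xd ⁻¹' {v p.2} := by
      ext ω; simp [hA, Set.mem_inter_iff]
    rw [this]
    exact (hXb (measurableSet_singleton _)).inter (hXd (measurableSet_singleton _))
  have hvinj : Function.Injective v := by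
    intro ε ε' h
    funext i
    have := congrFun h i.succ
    simp only [hv, Fin.cons_succ] at this
    cases hε : ε i <;> cases hε' : ε' i <;> simp [hε, hε'] at this ⊢
    · exact hyne this.symm
    · exact hyne this
  have hdisj : Pairwise (Function.onFun Disjoint A) := by
    intro p q hpq
    refine Set.disjoint_left.mpr fun ω hp hq => hpq ?_
    obtain ⟨h1, h2⟩ := hp; obtain ⟨h3, h4⟩ := hq
    have e1 : p.1 = q.1 := hvinj (h1.symm.trans h3)
    have e2 : p.2 = q.2 := hvinj (h2.symm.trans h4)
    exact Prod.ext e1 e2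
  -- measure of atoms
  set wt : (Fin D → Bool) × (Fin D → Bool) → ℝ :=
    fun p => (∏ i, (if p.1 i then pb else 1 - pb)) * (1 / 2) ^ D with hwt
  have hwt_nonneg : ∀ p, 0 ≤ wt p := by
    intro p
    apply mul_nonneg
    · exact Finset.prod_nonneg fun i _ => by
        by_cases h : p.1 i <;> simp [h] <;> linarith
    · positivity
  have hμA : ∀ p, μ (A p) = ENNReal.ofReal (wt p) := fun p => hlaw p.1 p.2
  have hsum_pε : ∑ ε : Fin D → Bool, ∏ i, (if ε i then pb else 1 - pb) = 1 := by
    have h := aux_sum_prod (fun (_ : Fin D) (b : Bool) => if b then pb else 1 - pb)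
    simpa using h
  have h2D : ((2:ℝ) ^ D) * ((1:ℝ)/2) ^ D = 1 := by
    rw [div_pow, one_pow]
    field_simp
  have hcard : (Fintype.card (Fin D → Bool)) = 2 ^ D := by simp
  have hwt_total : ∑ p : (Fin D → Bool) × (Fin D → Bool), wt p = 1 := by
    rw [Fintype.sum_prod_type]
    have hin : ∀ ε : Fin D → Bool, ∑ _δ : Fin D → Bool,
        wt (ε, _δ) = ∏ i, (if ε i then pb else 1 - pb) := by
      intro ε
      have hconst : ∀ _δ : Fin D → Bool,
          wt (ε, _δ) = (∏ i, (if ε i then pb else 1 - pb)) * (1/2:ℝ)^D := fun _ => rfl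
      rw [Finset.sum_congr rfl fun δ _ => hconst δ, Finset.sum_const, Finset.card_univ,
        hcard, nsmul_eq_mul]
      push_cast
      rw [← mul_assoc, mul_comm ((2:ℝ)^D), mul_assoc, h2D, mul_one]
    rw [Finset.sum_congr rfl fun ε _ => hin ε, hsum_pε]
  -- the union has full measure
  set U : Set Ω := ⋃ p, A p with hU
  have hμU : μ U = 1 := by
    rw [hU, measure_iUnion hdisj hmeas, tsum_fintype]
    calc ∑ p, μ (A p) = ∑ p, ENNReal.ofReal (wt p) :=
          Finset.sum_congr rfl fun p _ => hμA p
      _ = ENNReal.ofReal (∑ p, wt p) :=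
          (ENNReal.ofReal_sum_of_nonneg (fun p _ => hwt_nonneg p)).symm
      _ = 1 := by rw [hwt_total, ENNReal.ofReal_one]
  have hμUc : μ Uᶜ = 0 := by
    rw [measure_compl (MeasurableSet.iUnion hmeas) (measure_ne_top μ _), hμU,
      measure_univ, tsub_self]
  -- the simple function
  set G : Ω → ℝ := fun ω => ∑ p : (Fin D → Bool) × (Fin D → Bool),
      Set.indicator (A p) (fun _ => c p) ω with hG
  have heq : ∀ ω ∈ U, dotProduct (W.mulVec (Xb ω)) (W.mulVec (Xd ω)) /
        (Real.sqrt (∑ q, (W.mulVec (Xb ω)) q ^ 2) *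
         Real.sqrt (∑ q, (W.mulVec (Xd ω)) q ^ 2)) = G ω := by
    intro ω hω
    obtain ⟨p, hp⟩ := Set.mem_iUnion.mp hω
    obtain ⟨h1, h2⟩ := hp
    have hval : dotProduct (W.mulVec (Xb ω)) (W.mulVec (Xd ω)) /
        (Real.sqrt (∑ q, (W.mulVec (Xb ω)) q ^ 2) *
         Real.sqrt (∑ q, (W.mulVec (Xd ω)) q ^ 2)) = c p := by
      rw [h1, h2, aux_dot W hW, hdotv, hnorm, hnorm, Real.mul_self_sqrt hDpos.le, hc]
    have hGval : G ω = c p := by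
      simp only [hG]
      rw [Finset.sum_eq_single p]
      · exact Set.indicator_of_mem (show ω ∈ A p from ⟨h1, h2⟩) (fun _ => c p)
      · intro q _ hq
        have hωq : ω ∉ A q := fun hmem =>
          Set.disjoint_left.mp (hdisj hq) hmem ⟨h1, h2⟩
        exact Set.indicator_of_notMem hωq (fun _ => c q)
      · intro h; exact absurd (Finset.mem_univ p) h
    rw [hval, hGval]
  have hae : (fun ω => dotProduct (W.mulVec (Xb ω)) (W.mulVec (Xd ω)) /
        (Real.sqrt (∑ q, (W.mulVec (Xb ω)) q ^ 2) *
         Real.sqrt (∑ q, (W.mulVec (Xd ω)) q ^ 2))) =ᵐ[μ] G := by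
    apply Filter.eventuallyEq_of_mem (MeasureTheory.mem_ae_iff.mpr hμUc) heq
  rw [integral_congr_ae hae, hG,
    integral_finset_sum _ (fun p _ => (integrable_const (c p)).indicator (hmeas p))]
  have hint : ∀ p : (Fin D → Bool) × (Fin D → Bool),
      ∫ ω, Set.indicator (A p) (fun _ => c p) ω ∂μ = wt p * c p := by
    intro p
    rw [integral_indicator_const _ (hmeas p), measureReal_def, hμA p, smul_eq_mul,
      ENNReal.toReal_ofReal (hwt_nonneg p)]
  rw [Finset.sum_congr rfl fun p _ => hint p]
  -- combinatorial computation of the sum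
  have hδsum : ∀ (ε : Fin D → Bool) (i : Fin D),
      ∑ δ : Fin D → Bool, (if ε i = δ i then (1:ℝ) else -1) * (1/2)^D = 0 := by
    intro ε i
    have hL : ∀ δ : Fin D → Bool,
        ∏ j, ((if j = i then (if ε i = δ j then (1:ℝ) else -1) else 1) * (1/2))
          = (if ε i = δ i then (1:ℝ) else -1) * (1/2)^D := by
      intro δ
      rw [Finset.prod_mul_distrib, Finset.prod_const, Finset.card_univ, Fintype.card_fin]
      congr 1
      rw [Finset.prod_eq_single i (fun j _ hj => by simp [hj]) (by simp)]
      simp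
    have h := aux_sum_prod
      (fun (j : Fin D) (b : Bool) => (if j = i then (if ε i = b then (1:ℝ) else -1) else 1) * (1/2))
    rw [Finset.sum_congr rfl fun δ _ => (hL δ).symm, h]
    exact Finset.prod_eq_zero (Finset.mem_univ i)
      (by cases hεi : ε i <;> simp [hεi] <;> norm_num)
  have hδfull : ∀ ε : Fin D → Bool, ∑ δ : Fin D → Bool, (1/2:ℝ)^D * (1 + S ε δ) = 1 := by
    intro ε
    have hsplit : ∀ δ : Fin D → Bool, (1/2:ℝ)^D * (1 + S ε δ)
        = (1/2:ℝ)^D + ∑ i, (if ε i = δ i then (1:ℝ) else -1) * (1/2)^D := by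
      intro δ
      rw [hS]
      simp only
      rw [mul_add, mul_one, Finset.mul_sum]
      congr 1
      exact Finset.sum_congr rfl fun i _ => mul_comm _ _
    rw [Finset.sum_congr rfl fun δ _ => hsplit δ, Finset.sum_add_distrib]
    have hc1 : ∑ _δ : Fin D → Bool, (1/2:ℝ)^D = 1 := by
      rw [Finset.sum_const, Finset.card_univ, hcard, nsmul_eq_mul]
      push_cast
      exact h2D
    have hc2 : ∑ δ : Fin D → Bool, ∑ i, (if ε i = δ i then (1:ℝ) else -1) * (1/2)^D = 0 := by
      rw [Finset.sum_comm]
      rw [Finset.sum_congr rfl fun i _ => hδsum ε i]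
      simp
    rw [hc1, hc2, add_zero]
  calc ∑ p : (Fin D → Bool) × (Fin D → Bool), wt p * c p
      = ∑ ε : Fin D → Bool, ∑ δ : Fin D → Bool, wt (ε, δ) * c (ε, δ) :=
        Fintype.sum_prod_type _
    _ = ∑ ε : Fin D → Bool, (∏ i, (if ε i then pb else 1 - pb)) * (1/((D:ℝ)+1)) := by
        refine Finset.sum_congr rfl fun ε _ => ?_
        have hterm2 : ∀ δ : Fin D → Bool, wt (ε, δ) * c (ε, δ)
            = ((∏ i, (if ε i then pb else 1 - pb)) * (1/((D:ℝ)+1)))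
              * ((1/2:ℝ)^D * (1 + S ε δ)) := by
          intro δ
          simp only [hwt, hc]
          ring
        rw [Finset.sum_congr rfl fun δ _ => hterm2 δ, ← Finset.mul_sum, hδfull, mul_one]
    _ = (∑ ε : Fin D → Bool, ∏ i, (if ε i then pb else 1 - pb)) * (1/((D:ℝ)+1)) := by
        rw [Finset.sum_mul]
    _ = 1 / ((D:ℝ) + 1) := by rw [hsum_pε, one_mul]
end
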